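/- Let γ be a private state on AA'BB' built from orthogonal shield states σ^± on A'B' as γ = (ψ⁺ ⊗ σ⁺ + ψ⁻ ⊗ σ⁻)/2, and let γ̂ be its key-attacked version (ψ⁺ + ψ⁻)/4 ⊗ (σ⁺ + σ⁻). Then ‖γ − γ̂‖_{SEP} ≤ (3/2)·‖σ⁺ − σ⁻‖_{SEP(A':B')} and ‖γ − γ̂‖_{PPT} ≤ ‖σ⁺ − σ⁻‖_{PPT(A':B')}. -/

import Mathlib

open scoped BigOperators ComplexOrder

noncomputable section

/-- A POVM (measurement) on a finite-dimensional space. -/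
structure POVM (ι : Type) [Fintype ι] [DecidableEq ι] where
  k : ℕ
  T : Fin k → Matrix ι ι ℂ
  pos : ∀ i, (T i).PosSemidef
  sum_eq : ∑ i, T i = 1

/-- The ℓ1 norm of the outcome vector of the measurement `P` applied to `X`. -/
def mval {ι : Type} [Fintype ι] [DecidableEq ι] (P : POVM ι) (X : Matrix ι ι ℂ) : ℝ :=
  ∑ i, ‖(P.T i * X).trace‖

/-- Tensor (product) of an operator on `α` and one on `β`. -/
def prodOp {α β : Type} (x : Matrix α α ℂ) (y : Matrix β β ℂ) : Matrix (α × β) (α × β) ℂ :=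
  fun p q => x p.1 q.1 * y p.2 q.2

/-- The set of separable states across the cut `α : β`. -/
def SepStates (α β : Type) [Fintype α] [Fintype β] : Set (Matrix (α × β) (α × β) ℂ) :=
  convexHull ℝ {σ : Matrix (α × β) (α × β) ℂ |
    ∃ (x : Matrix α α ℂ) (y : Matrix β β ℂ),
      x.PosSemidef ∧ x.trace = 1 ∧ y.PosSemidef ∧ y.trace = 1 ∧ σ = prodOp x y}

/-- The cone generated by separable states. -/
def SepCone (α β : Type) [Fintype α] [Fintype β] : Set (Matrix (α × β) (α × β) ℂ) :=
  {T | ∃ (t : ℝ) (σ : Matrix (α × β) (α × β) ℂ), 0 ≤ t ∧ σ ∈ SepStates α β ∧ T = t • σ}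

/-- Partial transposition (on the second factor). -/
def ptranspose {α β : Type} (ρ : Matrix (α × β) (α × β) ℂ) : Matrix (α × β) (α × β) ℂ :=
  fun p q => ρ (p.1, q.2) (q.1, p.2)

/-- The trace norm restricted to separable measurements (POVMs whose elements lie in the
cone generated by separable states). -/
def sepNorm {α β : Type} [Fintype α] [DecidableEq α] [Fintype β] [DecidableEq β]
    (X : Matrix (α × β) (α × β) ℂ) : ℝ :=
  sSup {r : ℝ | ∃ P : POVM (α × β), (∀ i, P.T i ∈ SepCone α β) ∧ r = mval P X}

/-- The trace norm restricted to PPT measurements (POVMs whose elements have positive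
semidefinite partial transpose). -/
def pptNorm {α β : Type} [Fintype α] [DecidableEq α] [Fintype β] [DecidableEq β]
    (X : Matrix (α × β) (α × β) ℂ) : ℝ :=
  sSup {r : ℝ | ∃ P : POVM (α × β), (∀ i, (ptranspose (P.T i)).PosSemidef) ∧ r = mval P X}

/-- Tensor product of a bipartite operator on `C:D` with one on `A':B'`, arranged
according to the bipartite cut `CA' : DB'`. -/
def tensorBip {α β γ δ : Type} (Y : Matrix (α × β) (α × β) ℂ) (X : Matrix (γ × δ) (γ × δ) ℂ) :
    Matrix ((α × γ) × (β × δ)) ((α × γ) × (β × δ)) ℂ :=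
  fun p q => Y (p.1.1, p.2.1) (q.1.1, q.2.1) * X (p.1.2, p.2.2) (q.1.2, q.2.2)

/-- The two-qubit Bell states `ψ^± = (|00⟩ ± |11⟩)(⟨00| ± ⟨11|)/2`, with sign `s = ±1`. -/
def bellSign (s : ℝ) : Matrix (Fin 2 × Fin 2) (Fin 2 × Fin 2) ℂ :=
  fun p q => if p.1 = p.2 ∧ q.1 = q.2 then
    ((2:ℂ))⁻¹ * (if p.1 = 1 then (s : ℂ) else 1) * (if q.1 = 1 then (s : ℂ) else 1) else 0

/-- The private state `γ = (ψ⁺ ⊗ σ⁺ + ψ⁻ ⊗ σ⁻)/2` on `AA' : BB'`. -/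
def privateState {α β : Type} (σp σm : Matrix (α × β) (α × β) ℂ) :
    Matrix ((Fin 2 × α) × (Fin 2 × β)) ((Fin 2 × α) × (Fin 2 × β)) ℂ :=
  (2:ℝ)⁻¹ • (tensorBip (bellSign 1) σp + tensorBip (bellSign (-1)) σm)

/-- The key-attacked state `γ̂ = (ψ⁺ + ψ⁻)/4 ⊗ (σ⁺ + σ⁻)`. -/
def keyAttacked {α β : Type} (σp σm : Matrix (α × β) (α × β) ℂ) :
    Matrix ((Fin 2 × α) × (Fin 2 × β)) ((Fin 2 × α) × (Fin 2 × β)) ℂ :=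
  (4:ℝ)⁻¹ • tensorBip (bellSign 1 + bellSign (-1)) (σp + σm)

namespace PrivAux
open Matrix

variable {α β : Type} [Fintype α] [DecidableEq α] [Fintype β] [DecidableEq β]

abbrev BigM (α β : Type) := Matrix ((Fin 2 × α) × (Fin 2 × β)) ((Fin 2 × α) × (Fin 2 × β)) ℂ

def blk (c d c' d' : Fin 2) (T : BigM α β) : Matrix (α × β) (α × β) ℂ :=
  Matrix.of fun p q => T ((c, p.1), (d, p.2)) ((c', q.1), (d', q.2))

lemma blk_sum {ι : Type*} (s : Finset ι) (f : ι → BigM α β) (c d c' d' : Fin 2) :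
    blk c d c' d' (∑ i ∈ s, f i) = ∑ i ∈ s, blk c d c' d' (f i) := by
  ext p q
  simp [blk, Matrix.sum_apply]

def Jmat (g : Fin 2 → Fin 2 → ℂ) : Matrix (α × β) ((Fin 2 × α) × (Fin 2 × β)) ℂ :=
  Matrix.of fun p q => if q.1.2 = p.1 ∧ q.2.2 = p.2 then g q.1.1 q.2.1 else 0

lemma Jconj (g : Fin 2 → Fin 2 → ℂ) (T : BigM α β) :
    Jmat (α := α) (β := β) g * T * (Jmat (α := α) (β := β) g)ᴴ
      = ∑ c : Fin 2, ∑ d : Fin 2, ∑ c' : Fin 2, ∑ d' : Fin 2,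
          (g c d * star (g c' d')) • blk c d c' d' T := by
  ext p q
  simp only [Matrix.mul_apply, Matrix.conjTranspose_apply, Jmat, Matrix.of_apply,
    Matrix.sum_apply, Matrix.smul_apply, blk, smul_eq_mul]
  rw [Fintype.sum_prod_type]
  simp only [Fintype.sum_prod_type, ite_and, apply_ite star, mul_ite, ite_mul, zero_mul,
    mul_zero, star_zero, Finset.sum_ite_eq', Finset.mem_univ, if_true,
    Finset.sum_ite_irrel, Finset.sum_const_zero, Finset.mul_sum, Finset.sum_mul]
  simp only [Fin.sum_univ_two]
  ring


lemma psd_combo {T : BigM α β} (hT : T.PosSemidef) (g : Fin 2 → Fin 2 → ℂ) :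
    (∑ c : Fin 2, ∑ d : Fin 2, ∑ c' : Fin 2, ∑ d' : Fin 2,
        (g c d * star (g c' d')) • blk c d c' d' T).PosSemidef := by
  rw [← Jconj]
  exact hT.mul_mul_conjTranspose_same (Jmat g)

def Wp (T : BigM α β) : Matrix (α × β) (α × β) ℂ :=
  blk 0 0 0 0 T + blk 0 1 0 1 T + blk 1 0 1 0 T + blk 1 1 1 1 T + blk 0 0 1 1 T + blk 1 1 0 0 T

def Wm (T : BigM α β) : Matrix (α × β) (α × β) ℂ :=
  blk 0 0 0 0 T + blk 0 1 0 1 T + blk 1 0 1 0 T + blk 1 1 1 1 T - blk 0 0 1 1 T - blk 1 1 0 0 T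

lemma Wp_psd {T : BigM α β} (hT : T.PosSemidef) : (Wp T).PosSemidef := by
  have h1 := psd_combo hT (fun c d => if c = d then 1 else 0)
  have h2 := psd_combo hT (fun c d => if c = 0 ∧ d = 1 then 1 else 0)
  have h3 := psd_combo hT (fun c d => if c = 1 ∧ d = 0 then 1 else 0)
  simp only [Fin.sum_univ_two, show (0:Fin 2) ≠ 1 by decide, show (1:Fin 2) ≠ 0 by decide,
    if_true, if_false, and_true, true_and, and_false, false_and, and_self, reduceIte, star_one, star_zero, mul_one, mul_zero, zero_mul, one_mul,
    one_smul, zero_smul, add_zero, zero_add] at h1 h2 h3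
  have e : Wp T = (blk 0 0 0 0 T + blk 0 0 1 1 T + (blk 1 1 0 0 T + blk 1 1 1 1 T))
      + (blk 0 1 0 1 T) + (blk 1 0 1 0 T) := by
    unfold Wp; abel
  rw [e]
  exact (h1.add h2).add h3


lemma Wm_psd {T : BigM α β} (hT : T.PosSemidef) : (Wm T).PosSemidef := by
  have h1 := psd_combo hT (fun c d => if c = d then (if c = 0 then 1 else -1) else 0)
  have h2 := psd_combo hT (fun c d => if c = 0 ∧ d = 1 then 1 else 0)
  have h3 := psd_combo hT (fun c d => if c = 1 ∧ d = 0 then 1 else 0)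
  simp only [Fin.sum_univ_two, show (0:Fin 2) ≠ 1 by decide, show (1:Fin 2) ≠ 0 by decide,
    if_true, if_false, and_true, true_and, and_false, false_and, and_self, reduceIte,
    star_one, star_zero, star_neg, mul_one, mul_zero, zero_mul, one_mul, mul_neg, neg_mul,
    neg_neg, neg_zero, one_smul, zero_smul, neg_smul, add_zero, zero_add] at h1 h2 h3
  have e : Wm T = blk 0 0 0 0 T + -blk 0 0 1 1 T + (-blk 1 1 0 0 T + blk 1 1 1 1 T)
      + blk 0 1 0 1 T + blk 1 0 1 0 T := by
    unfold Wm; abel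
  rw [e]
  exact (h1.add h2).add h3

def Vp (T : BigM α β) : Matrix (α × β) (α × β) ℂ :=
  blk 0 0 0 0 T + blk 0 1 0 1 T + blk 1 0 1 0 T + blk 1 1 1 1 T + blk 0 1 1 0 T + blk 1 0 0 1 T

def Vm (T : BigM α β) : Matrix (α × β) (α × β) ℂ :=
  blk 0 0 0 0 T + blk 0 1 0 1 T + blk 1 0 1 0 T + blk 1 1 1 1 T - blk 0 1 1 0 T - blk 1 0 0 1 T

lemma Vp_psd {T : BigM α β} (hT : T.PosSemidef) : (Vp T).PosSemidef := by
  have h1 := psd_combo hT (fun c d => if c = d then 0 else 1)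
  have h2 := psd_combo hT (fun c d => if c = 0 ∧ d = 0 then 1 else 0)
  have h3 := psd_combo hT (fun c d => if c = 1 ∧ d = 1 then 1 else 0)
  simp only [Fin.sum_univ_two, show (0:Fin 2) ≠ 1 by decide, show (1:Fin 2) ≠ 0 by decide,
    if_true, if_false, and_true, true_and, and_false, false_and, and_self, reduceIte,
    star_one, star_zero, mul_one, mul_zero, zero_mul, one_mul,
    one_smul, zero_smul, add_zero, zero_add] at h1 h2 h3
  have e : Vp T = (blk 0 1 0 1 T + blk 0 1 1 0 T + (blk 1 0 0 1 T + blk 1 0 1 0 T))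
      + blk 0 0 0 0 T + blk 1 1 1 1 T := by
    unfold Vp; abel
  rw [e]
  exact (h1.add h2).add h3

lemma Vm_psd {T : BigM α β} (hT : T.PosSemidef) : (Vm T).PosSemidef := by
  have h1 := psd_combo hT (fun c d => if c = d then 0 else (if c = 0 then 1 else -1))
  have h2 := psd_combo hT (fun c d => if c = 0 ∧ d = 0 then 1 else 0)
  have h3 := psd_combo hT (fun c d => if c = 1 ∧ d = 1 then 1 else 0)
  simp only [Fin.sum_univ_two, show (0:Fin 2) ≠ 1 by decide, show (1:Fin 2) ≠ 0 by decide,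
    if_true, if_false, and_true, true_and, and_false, false_and, and_self, reduceIte,
    star_one, star_zero, star_neg, mul_one, mul_zero, zero_mul, one_mul, mul_neg, neg_mul,
    neg_neg, neg_zero, one_smul, zero_smul, neg_smul, add_zero, zero_add] at h1 h2 h3
  have e : Vm T = blk 0 1 0 1 T + -blk 0 1 1 0 T + (-blk 1 0 0 1 T + blk 1 0 1 0 T)
      + blk 0 0 0 0 T + blk 1 1 1 1 T := by
    unfold Vm; abel
  rw [e]
  exact (h1.add h2).add h3

lemma pt_Wp (T : BigM α β) : ptranspose (Wp T) = Vp (ptranspose T) := by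
  ext p q
  simp only [ptranspose, Wp, Vp, blk, Matrix.add_apply, Matrix.of_apply]

lemma pt_Wm (T : BigM α β) : ptranspose (Wm T) = Vm (ptranspose T) := by
  ext p q
  simp only [ptranspose, Wm, Vm, blk, Matrix.add_apply, Matrix.sub_apply, Matrix.of_apply]

lemma blk_one_diag (c d : Fin 2) : blk c d c d (1 : BigM α β) = 1 := by
  ext p q
  simp [blk, Matrix.one_apply, Prod.ext_iff]

lemma blk_one_off {c d c' d' : Fin 2} (h : c ≠ c') : blk c d c' d' (1 : BigM α β) = 0 := by
  ext p q
  simp only [blk, Matrix.of_apply, Matrix.one_apply, Matrix.zero_apply]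
  rw [if_neg]
  rintro h'
  rw [Prod.ext_iff, Prod.ext_iff] at h'
  exact h h'.1.1

lemma Wp_one_add_Wm_one : Wp (1 : BigM α β) + Wm 1 = (8 : ℂ) • 1 := by
  unfold Wp Wm
  rw [blk_one_diag, blk_one_diag, blk_one_diag, blk_one_diag,
    blk_one_off (by decide), blk_one_off (by decide)]
  module

lemma delta_eq (σp σm : Matrix (α × β) (α × β) ℂ) :
    privateState σp σm - keyAttacked σp σm
      = (4:ℝ)⁻¹ • tensorBip (bellSign 1 - bellSign (-1)) (σp - σm) := by
  ext p q
  simp only [privateState, keyAttacked, tensorBip, Matrix.sub_apply, Matrix.add_apply,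
    Matrix.smul_apply, smul_eq_mul, Complex.real_smul, Complex.ofReal_inv,
    Complex.ofReal_ofNat]
  ring

lemma trace_key (T : BigM α β) (X : Matrix (α × β) (α × β) ℂ) :
    (T * tensorBip (bellSign 1 - bellSign (-1)) X).trace
      = (blk 0 0 1 1 T * X).trace + (blk 1 1 0 0 T * X).trace := by
  simp only [Matrix.trace, Matrix.diag_apply, Matrix.mul_apply, blk, Matrix.of_apply,
    tensorBip, Matrix.sub_apply, bellSign]
  simp only [Fintype.sum_prod_type, Fin.sum_univ_two]
  norm_num

section Small
variable {γ δ : Type} [Fintype γ] [DecidableEq γ] [Fintype δ] [DecidableEq δ]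

lemma prodOp_psd {x : Matrix γ γ ℂ} {y : Matrix δ δ ℂ}
    (hx : x.PosSemidef) (hy : y.PosSemidef) : (prodOp x y).PosSemidef := by
  exact hx.kronecker hy

lemma psd_real_smul {n : Type} [Fintype n] {T : Matrix n n ℂ} (hT : T.PosSemidef)
    {r : ℝ} (hr : 0 ≤ r) : ((r : ℂ) • T).PosSemidef := by
  exact hT.smul (Complex.zero_le_real.mpr hr)

lemma psd_diag_nonneg {n : Type} [Fintype n] [DecidableEq n] {T : Matrix n n ℂ}
    (hT : T.PosSemidef) (p : n) : 0 ≤ T p p := by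
  exact hT.diag_nonneg

lemma psd_trace_nonneg {n : Type} [Fintype n] [DecidableEq n] {T : Matrix n n ℂ}
    (hT : T.PosSemidef) : 0 ≤ T.trace := by
  exact Finset.sum_nonneg fun p _ => psd_diag_nonneg hT p

lemma psd_trace_zero {n : Type} [Fintype n] [DecidableEq n] {T : Matrix n n ℂ}
    (hT : T.PosSemidef) (h : T.trace = 0) : T = 0 := by
  exact hT.trace_eq_zero_iff.mp h

lemma zero_mem_sepCone [Nonempty γ] [Nonempty δ] :
    (0 : Matrix (γ × δ) (γ × δ) ℂ) ∈ SepCone γ δ := by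
  have hcγ : (0:ℝ) ≤ (Fintype.card γ : ℝ)⁻¹ := by positivity
  have hcδ : (0:ℝ) ≤ (Fintype.card δ : ℝ)⁻¹ := by positivity
  have hγ : ((((Fintype.card γ : ℝ)⁻¹ : ℝ) : ℂ) • (1 : Matrix γ γ ℂ)).trace = 1 := by
    have h1 : (Fintype.card γ : ℝ) ≠ 0 := by positivity
    rw [Matrix.trace_smul, Matrix.trace_one, smul_eq_mul]
    push_cast
    field_simp
  have hδ : ((((Fintype.card δ : ℝ)⁻¹ : ℝ) : ℂ) • (1 : Matrix δ δ ℂ)).trace = 1 := by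
    have h1 : (Fintype.card δ : ℝ) ≠ 0 := by positivity
    rw [Matrix.trace_smul, Matrix.trace_one, smul_eq_mul]
    push_cast
    field_simp
  refine ⟨0, prodOp ((((Fintype.card γ : ℝ)⁻¹ : ℝ) : ℂ) • 1)
      ((((Fintype.card δ : ℝ)⁻¹ : ℝ) : ℂ) • 1), le_refl 0, ?_, by simp⟩
  apply subset_convexHull
  exact ⟨_, _, psd_real_smul Matrix.PosSemidef.one hcγ, hγ,
    psd_real_smul Matrix.PosSemidef.one hcδ, hδ, rfl⟩

lemma smul_mem_sepCone {t : ℝ} (ht : 0 ≤ t) {M : Matrix (γ × δ) (γ × δ) ℂ}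
    (hM : M ∈ SepCone γ δ) : t • M ∈ SepCone γ δ := by
  obtain ⟨s, σ, hs, hσ, rfl⟩ := hM
  exact ⟨t * s, σ, mul_nonneg ht hs, hσ, by rw [smul_smul]⟩

lemma add_mem_sepCone [Nonempty γ] [Nonempty δ] {M N : Matrix (γ × δ) (γ × δ) ℂ}
    (hM : M ∈ SepCone γ δ) (hN : N ∈ SepCone γ δ) : M + N ∈ SepCone γ δ := by
  obtain ⟨s, σ, hs, hσ, rfl⟩ := hM
  obtain ⟨t, τ, ht, hτ, rfl⟩ := hN
  rcases eq_or_lt_of_le (add_nonneg hs ht) with h0 | hpos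
  · have hs0 : s = 0 := by linarith
    have ht0 : t = 0 := by linarith
    rw [hs0, ht0]
    simpa using zero_mem_sepCone
  · refine ⟨s + t, (s / (s + t)) • σ + (t / (s + t)) • τ, le_of_lt hpos, ?_, ?_⟩
    · exact (convex_convexHull ℝ _) hσ hτ (by positivity) (by positivity)
        (by field_simp)
    · rw [smul_add, smul_smul, smul_smul]
      congr 2 <;> field_simp

end Small

def xblk {γ : Type} (c c' : Fin 2) (x : Matrix (Fin 2 × γ) (Fin 2 × γ) ℂ) : Matrix γ γ ℂ :=
  Matrix.of fun a a' => x (c, a) (c', a')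

section OneSided
variable {γ : Type} [Fintype γ] [DecidableEq γ]

def Jsm (h : Fin 2 → ℂ) : Matrix γ (Fin 2 × γ) ℂ :=
  Matrix.of fun a q => if q.2 = a then h q.1 else 0

lemma Jsm_conj (h : Fin 2 → ℂ) (x : Matrix (Fin 2 × γ) (Fin 2 × γ) ℂ) :
    Jsm (γ := γ) h * x * (Jsm (γ := γ) h)ᴴ = ∑ c : Fin 2, ∑ c' : Fin 2, (h c * star (h c')) • xblk c c' x := by
  ext a a'
  simp only [Matrix.mul_apply, Matrix.conjTranspose_apply, Jsm, Matrix.of_apply,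
    Matrix.sum_apply, Matrix.smul_apply, xblk, smul_eq_mul]
  rw [Fintype.sum_prod_type]
  simp only [Fintype.sum_prod_type, apply_ite star, mul_ite, ite_mul, zero_mul,
    mul_zero, star_zero, Finset.sum_ite_eq', Finset.mem_univ, if_true,
    Finset.sum_ite_irrel, Finset.sum_const_zero, Finset.mul_sum, Finset.sum_mul]
  simp only [Fin.sum_univ_two]
  ring

lemma psd_combo1 {x : Matrix (Fin 2 × γ) (Fin 2 × γ) ℂ} (hx : x.PosSemidef) (h : Fin 2 → ℂ) :
    (∑ c : Fin 2, ∑ c' : Fin 2, (h c * star (h c')) • xblk c c' x).PosSemidef := by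
  rw [← Jsm_conj]
  exact hx.mul_mul_conjTranspose_same (Jsm h)

def Apm (s : ℂ) (x : Matrix (Fin 2 × γ) (Fin 2 × γ) ℂ) : Matrix γ γ ℂ :=
  xblk 0 0 x + s • xblk 0 1 x + star s • xblk 1 0 x + xblk 1 1 x

lemma Apm_psd {x : Matrix (Fin 2 × γ) (Fin 2 × γ) ℂ} (hx : x.PosSemidef) (s : ℂ)
    (hs : s * star s = 1) : (Apm s x).PosSemidef := by
  have h1 := psd_combo1 hx (fun c => if c = 0 then 1 else star s)
  simp only [Fin.sum_univ_two, show (0:Fin 2) ≠ 1 by decide, show (1:Fin 2) ≠ 0 by decide,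
    if_true, if_false, reduceIte, star_one, star_star, mul_one, one_mul, one_smul] at h1
  rw [mul_comm (star s) s] at h1
  rw [hs, one_smul] at h1
  have e : Apm s x = xblk 0 0 x + s • xblk 0 1 x + (star s • xblk 1 0 x + xblk 1 1 x) := by
    unfold Apm; abel
  rw [e]
  exact h1

end OneSided

lemma blk_prodOp (c d c' d' : Fin 2) (x : Matrix (Fin 2 × α) (Fin 2 × α) ℂ)
    (y : Matrix (Fin 2 × β) (Fin 2 × β) ℂ) :
    blk c d c' d' (prodOp x y) = prodOp (xblk c c' x) (xblk d d' y) := rfl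

lemma Wp_prodOp (x : Matrix (Fin 2 × α) (Fin 2 × α) ℂ) (y : Matrix (Fin 2 × β) (Fin 2 × β) ℂ) :
    Wp (prodOp x y) = (4:ℂ)⁻¹ • (prodOp (Apm 1 x) (Apm 1 y) + prodOp (Apm (-1) x) (Apm (-1) y)
      + prodOp (Apm Complex.I x) (Apm (-Complex.I) y)
      + prodOp (Apm (-Complex.I) x) (Apm Complex.I y)) := by
  ext p q
  simp only [Wp, blk, Apm, prodOp, xblk, Matrix.add_apply, Matrix.smul_apply, Matrix.of_apply,
    smul_eq_mul, star_one, star_neg, Complex.star_def, Complex.conj_I, _root_.map_one, neg_neg]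
  linear_combination ((x (0, p.1) (1, q.1) - x (1, p.1) (0, q.1))
    * (y (0, p.2) (1, q.2) - y (1, p.2) (0, q.2)) / 2) * Complex.I_mul_I

lemma Wm_prodOp (x : Matrix (Fin 2 × α) (Fin 2 × α) ℂ) (y : Matrix (Fin 2 × β) (Fin 2 × β) ℂ) :
    Wm (prodOp x y) = (4:ℂ)⁻¹ • (prodOp (Apm 1 x) (Apm (-1) y) + prodOp (Apm (-1) x) (Apm 1 y)
      + prodOp (Apm Complex.I x) (Apm Complex.I y)
      + prodOp (Apm (-Complex.I) x) (Apm (-Complex.I) y)) := by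
  ext p q
  simp only [Wm, blk, Apm, prodOp, xblk, Matrix.add_apply, Matrix.sub_apply, Matrix.smul_apply,
    Matrix.of_apply, smul_eq_mul, star_one, star_neg, Complex.star_def, Complex.conj_I,
    _root_.map_one, neg_neg]
  linear_combination (-(x (0, p.1) (1, q.1) - x (1, p.1) (0, q.1))
    * (y (0, p.2) (1, q.2) - y (1, p.2) (0, q.2)) / 2) * Complex.I_mul_I

lemma cSmul_eq_rSmul {n m : Type} (r : ℝ) (M : Matrix n m ℂ) : ((r : ℝ) : ℂ) • M = r • M := by
  ext p q
  simp [Complex.real_smul]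

section Small2
variable {γ δ : Type} [Fintype γ] [DecidableEq γ] [Fintype δ] [DecidableEq δ]

lemma psd_prodOp_mem_sepCone [Nonempty γ] [Nonempty δ] {x : Matrix γ γ ℂ} {y : Matrix δ δ ℂ}
    (hx : x.PosSemidef) (hy : y.PosSemidef) : prodOp x y ∈ SepCone γ δ := by
  have hxr : x.trace = ((x.trace.re : ℝ) : ℂ) := by
    have h := psd_trace_nonneg hx
    rw [Complex.le_def] at h
    exact Complex.ext rfl (by simpa using h.2.symm)
  have hyr : y.trace = ((y.trace.re : ℝ) : ℂ) := by
    have h := psd_trace_nonneg hy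
    rw [Complex.le_def] at h
    exact Complex.ext rfl (by simpa using h.2.symm)
  have hxre : 0 ≤ x.trace.re := by
    have h := psd_trace_nonneg hx
    rw [Complex.le_def] at h
    simpa using h.1
  have hyre : 0 ≤ y.trace.re := by
    have h := psd_trace_nonneg hy
    rw [Complex.le_def] at h
    simpa using h.1
  rcases eq_or_lt_of_le hxre with h0 | hxpos
  · have : x = 0 := psd_trace_zero hx (by rw [hxr, ← h0]; simp)
    have e : prodOp x y = 0 := by
      ext p q
      simp [prodOp, this]
    rw [e]
    exact zero_mem_sepCone
  rcases eq_or_lt_of_le hyre with h0 | hypos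
  · have : y = 0 := psd_trace_zero hy (by rw [hyr, ← h0]; simp)
    have e : prodOp x y = 0 := by
      ext p q
      simp [prodOp, this]
    rw [e]
    exact zero_mem_sepCone
  set r := x.trace.re
  set s := y.trace.re
  refine ⟨r * s, prodOp (((r⁻¹ : ℝ) : ℂ) • x) (((s⁻¹ : ℝ) : ℂ) • y),
    le_of_lt (by positivity), ?_, ?_⟩
  · apply subset_convexHull
    refine ⟨_, _, psd_real_smul hx (by positivity), ?_, psd_real_smul hy (by positivity), ?_, rfl⟩
    · rw [Matrix.trace_smul, smul_eq_mul, hxr]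
      rw [← Complex.ofReal_mul]
      rw [inv_mul_cancel₀ (ne_of_gt hxpos)]
      simp
    · rw [Matrix.trace_smul, smul_eq_mul, hyr]
      rw [← Complex.ofReal_mul]
      rw [inv_mul_cancel₀ (ne_of_gt hypos)]
      simp
  · ext p q
    simp only [prodOp, Matrix.smul_apply, smul_eq_mul, Complex.real_smul]
    push_cast
    have hr : (r : ℂ) ≠ 0 := by exact_mod_cast ne_of_gt hxpos
    have hs : (s : ℂ) ≠ 0 := by exact_mod_cast ne_of_gt hypos
    field_simp

end Small2

lemma Wp_add (S T : BigM α β) : Wp (S + T) = Wp S + Wp T := by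
  ext p q
  simp only [Wp, blk, Matrix.add_apply, Matrix.of_apply]
  ring

lemma Wm_add (S T : BigM α β) : Wm (S + T) = Wm S + Wm T := by
  ext p q
  simp only [Wm, blk, Matrix.add_apply, Matrix.sub_apply, Matrix.of_apply]
  ring

lemma Wp_rsmul (r : ℝ) (T : BigM α β) : Wp (r • T) = r • Wp T := by
  ext p q
  simp only [Wp, blk, Matrix.add_apply, Matrix.smul_apply, Matrix.of_apply, Complex.real_smul]
  ring

lemma Wm_rsmul (r : ℝ) (T : BigM α β) : Wm (r • T) = r • Wm T := by
  ext p q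
  simp only [Wm, blk, Matrix.add_apply, Matrix.sub_apply, Matrix.smul_apply, Matrix.of_apply,
    Complex.real_smul]
  ring

lemma Wp_mem_sepCone [Nonempty α] [Nonempty β] {T : BigM α β}
    (hT : T ∈ SepCone (Fin 2 × α) (Fin 2 × β)) : Wp T ∈ SepCone α β := by
  obtain ⟨t, σ, ht, hσ, rfl⟩ := hT
  rw [Wp_rsmul]
  apply smul_mem_sepCone ht
  have hconv : Convex ℝ {T' : BigM α β | Wp T' ∈ SepCone α β} := by
    intro u hu v hv a b ha hb hab
    show Wp (a • u + b • v) ∈ SepCone α β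
    rw [Wp_add, Wp_rsmul, Wp_rsmul]
    exact add_mem_sepCone (smul_mem_sepCone ha hu) (smul_mem_sepCone hb hv)
  refine convexHull_min ?_ hconv hσ
  rintro σ' ⟨x, y, hx, -, hy, -, rfl⟩
  show Wp (prodOp x y) ∈ SepCone α β
  rw [Wp_prodOp, show ((4:ℂ)⁻¹ : ℂ) = (((4⁻¹:ℝ) : ℝ) : ℂ) by push_cast; ring, cSmul_eq_rSmul]
  apply smul_mem_sepCone (by norm_num)
  have m1 := psd_prodOp_mem_sepCone (Apm_psd hx 1 (by simp)) (Apm_psd hy 1 (by simp))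
  have m2 := psd_prodOp_mem_sepCone (Apm_psd hx (-1) (by simp)) (Apm_psd hy (-1) (by simp))
  have m3 := psd_prodOp_mem_sepCone (Apm_psd hx Complex.I (by simp))
    (Apm_psd hy (-Complex.I) (by simp))
  have m4 := psd_prodOp_mem_sepCone (Apm_psd hx (-Complex.I) (by simp))
    (Apm_psd hy Complex.I (by simp))
  exact add_mem_sepCone (add_mem_sepCone (add_mem_sepCone m1 m2) m3) m4

lemma Wm_mem_sepCone [Nonempty α] [Nonempty β] {T : BigM α β}
    (hT : T ∈ SepCone (Fin 2 × α) (Fin 2 × β)) : Wm T ∈ SepCone α β := by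
  obtain ⟨t, σ, ht, hσ, rfl⟩ := hT
  rw [Wm_rsmul]
  apply smul_mem_sepCone ht
  have hconv : Convex ℝ {T' : BigM α β | Wm T' ∈ SepCone α β} := by
    intro u hu v hv a b ha hb hab
    show Wm (a • u + b • v) ∈ SepCone α β
    rw [Wm_add, Wm_rsmul, Wm_rsmul]
    exact add_mem_sepCone (smul_mem_sepCone ha hu) (smul_mem_sepCone hb hv)
  refine convexHull_min ?_ hconv hσ
  rintro σ' ⟨x, y, hx, -, hy, -, rfl⟩
  show Wm (prodOp x y) ∈ SepCone α β
  rw [Wm_prodOp, show ((4:ℂ)⁻¹ : ℂ) = (((4⁻¹:ℝ) : ℝ) : ℂ) by push_cast; ring, cSmul_eq_rSmul]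
  apply smul_mem_sepCone (by norm_num)
  have m1 := psd_prodOp_mem_sepCone (Apm_psd hx 1 (by simp)) (Apm_psd hy (-1) (by simp))
  have m2 := psd_prodOp_mem_sepCone (Apm_psd hx (-1) (by simp)) (Apm_psd hy 1 (by simp))
  have m3 := psd_prodOp_mem_sepCone (Apm_psd hx Complex.I (by simp))
    (Apm_psd hy Complex.I (by simp))
  have m4 := psd_prodOp_mem_sepCone (Apm_psd hx (-Complex.I) (by simp))
    (Apm_psd hy (-Complex.I) (by simp))
  exact add_mem_sepCone (add_mem_sepCone (add_mem_sepCone m1 m2) m3) m4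

lemma Wp_sum {ι : Type} (s : Finset ι) (f : ι → BigM α β) :
    Wp (∑ i ∈ s, f i) = ∑ i ∈ s, Wp (f i) := by
  unfold Wp
  simp only [blk_sum, Finset.sum_add_distrib]

lemma Wm_sum {ι : Type} (s : Finset ι) (f : ι → BigM α β) :
    Wm (∑ i ∈ s, f i) = ∑ i ∈ s, Wm (f i) := by
  unfold Wm
  simp only [blk_sum, Finset.sum_add_distrib, Finset.sum_sub_distrib]

def attack (P : POVM ((Fin 2 × α) × (Fin 2 × β))) : POVM (α × β) where
  k := P.k + P.k
  T := Fin.addCases (fun i => ((8:ℝ)⁻¹ : ℝ) • Wp (P.T i))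
    (fun i => ((8:ℝ)⁻¹ : ℝ) • Wm (P.T i))
  pos := by
    intro i
    induction i using Fin.addCases with
    | left i =>
      simp only [Fin.addCases_left]
      rw [← cSmul_eq_rSmul]
      exact psd_real_smul (Wp_psd (P.pos i)) (by norm_num)
    | right i =>
      simp only [Fin.addCases_right]
      rw [← cSmul_eq_rSmul]
      exact psd_real_smul (Wm_psd (P.pos i)) (by norm_num)
  sum_eq := by
    rw [Fin.sum_univ_add]
    simp only [Fin.addCases_left, Fin.addCases_right]
    rw [← Finset.smul_sum, ← Finset.smul_sum, ← Wp_sum, ← Wm_sum, P.sum_eq, ← smul_add,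
      Wp_one_add_Wm_one]
    ext p q
    simp [Complex.real_smul]

lemma term_bound (T : BigM α β) (X : Matrix (α × β) (α × β) ℂ) :
    ‖(T * ((4:ℝ)⁻¹ • tensorBip (bellSign 1 - bellSign (-1)) X)).trace‖
      ≤ ‖((((8:ℝ)⁻¹ : ℝ) • Wp T) * X).trace‖
        + ‖((((8:ℝ)⁻¹ : ℝ) • Wm T) * X).trace‖ := by
  rw [Matrix.mul_smul, Matrix.trace_smul, Matrix.smul_mul, Matrix.trace_smul,
    Matrix.smul_mul, Matrix.trace_smul, trace_key]
  have hW : (Wp T * X).trace = (Wm T * X).trace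
      + 2 * ((blk 0 0 1 1 T * X).trace + (blk 1 1 0 0 T * X).trace) := by
    have e : Wp T = Wm T + (2:ℂ) • (blk 0 0 1 1 T + blk 1 1 0 0 T) := by
      unfold Wp Wm
      module
    rw [e, Matrix.add_mul, Matrix.trace_add, Matrix.smul_mul, Matrix.trace_smul,
      Matrix.add_mul, Matrix.trace_add]
    simp [smul_eq_mul]
  have habs : ∀ a b : ℂ, ‖a - b‖ ≤ ‖a‖ + ‖b‖ := by
    intro a b
    calc ‖a - b‖ = ‖a + (-b)‖ := by rw [sub_eq_add_neg]
    _ ≤ ‖a‖ + ‖-b‖ := norm_add_le _ _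
    _ = ‖a‖ + ‖b‖ := by rw [norm_neg]
  have key : (4:ℝ)⁻¹ • ((blk 0 0 1 1 T * X).trace + (blk 1 1 0 0 T * X).trace)
      = (8:ℝ)⁻¹ • (Wp T * X).trace - (8:ℝ)⁻¹ • (Wm T * X).trace := by
    rw [hW]
    simp only [Complex.real_smul]
    push_cast
    ring
  rw [key]
  exact habs _ _

lemma mval_le_attack (P : POVM ((Fin 2 × α) × (Fin 2 × β)))
    (σp σm : Matrix (α × β) (α × β) ℂ) :
    mval P (privateState σp σm - keyAttacked σp σm) ≤ mval (attack P) (σp - σm) := by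
  have e : mval (attack P) (σp - σm)
      = ∑ i, ‖((((8:ℝ)⁻¹ : ℝ) • Wp (P.T i)) * (σp - σm)).trace‖
        + ∑ i, ‖((((8:ℝ)⁻¹ : ℝ) • Wm (P.T i)) * (σp - σm)).trace‖ := by
    show (∑ i : Fin (P.k + P.k), _) = _
    rw [Fin.sum_univ_add]
    simp only [attack, Fin.addCases_left, Fin.addCases_right]
  rw [e, ← Finset.sum_add_distrib]
  unfold mval
  apply Finset.sum_le_sum
  intro i _
  rw [delta_eq]
  exact term_bound (P.T i) (σp - σm)

lemma psd_abs_entry {n : Type} [Fintype n] [DecidableEq n] {T : Matrix n n ℂ}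
    (hT : T.PosSemidef) (p q : n) :
    ‖T p q‖ ≤ ((T p p).re + (T q q).re) / 2 := by
  have hp := psd_diag_nonneg hT p
  have hq := psd_diag_nonneg hT q
  rw [Complex.le_def] at hp hq
  simp only [Complex.zero_re, Complex.zero_im] at hp hq
  by_cases hpq : p = q
  · subst hpq
    have hre : T p p = ((T p p).re : ℂ) := Complex.ext rfl (by simp [← hp.2])
    have h1 : ‖T p p‖ = |(T p p).re| := by
      conv_lhs => rw [hre]
      exact (Complex.norm_real _).trans (Real.norm_eq_abs _)
    rw [h1, abs_of_nonneg hp.1]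
    linarith
  by_cases hz : T p q = 0
  · rw [hz]
    simp only [norm_zero]
    linarith
  set z := T p q with hzdef
  set c : ℂ := -z / (‖z‖ : ℂ) with hc
  set v : n → ℂ := fun r => if r = p then c else if r = q then 1 else 0 with hv
  have hsplit : ∀ A B : n → ℂ,
      (∑ r, (if r = p then A r else if r = q then B r else 0)) = A p + B q := by
    intro A B
    have e : ∀ r ∈ Finset.univ,
        (if r = p then A r else if r = q then B r else 0)
          = (if r = p then A r else 0) + (if r = q then B r else 0) := by
      intro r _
      by_cases h1 : r = p
      · subst h1
        simp [hpq]
      · by_cases h2 : r = q <;> simp [h1, h2, Ne.symm hpq]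
    rw [Finset.sum_congr rfl e, Finset.sum_add_distrib]
    simp
  have hmv : ∀ r, (T *ᵥ v) r = T r p * c + T r q := by
    intro r
    show (∑ s, T r s * v s) = _
    have e2 : ∀ s, T r s * v s = (if s = p then T r s * c else if s = q then T r s else 0) := by
      intro s
      by_cases h1 : s = p
      · simp [hv, h1]
      · by_cases h2 : s = q <;> simp [hv, h1, h2, Ne.symm hpq]
    calc (∑ s, T r s * v s) = ∑ s, (if s = p then T r s * c else if s = q then T r s else 0) :=
          Finset.sum_congr rfl fun s _ => e2 s
    _ = T r p * c + T r q := hsplit _ _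
  have hform : star v ⬝ᵥ T *ᵥ v = star c * (T p p * c + T p q) + (T q p * c + T q q) := by
    show (∑ r, star (v r) * (T *ᵥ v) r) = _
    have e3 : ∀ r, star (v r) * (T *ᵥ v) r
        = (if r = p then star c * (T *ᵥ v) r else if r = q then (T *ᵥ v) r else 0) := by
      intro r
      by_cases h1 : r = p
      · simp [hv, h1]
      · by_cases h2 : r = q <;> simp [hv, h1, h2, Ne.symm hpq]
    calc (∑ r, star (v r) * (T *ᵥ v) r)
        = ∑ r, (if r = p then star c * (T *ᵥ v) r else if r = q then (T *ᵥ v) r else 0) :=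
          Finset.sum_congr rfl fun r _ => e3 r
    _ = star c * (T *ᵥ v) p + (T *ᵥ v) q := hsplit _ _
    _ = _ := by rw [hmv p, hmv q]
  have h0 := hT.dotProduct_mulVec_nonneg v
  rw [hform] at h0
  have habs0 : (‖z‖ : ℂ) ≠ 0 := by
    exact_mod_cast norm_ne_zero_iff.mpr hz
  have hnormsq : (starRingEnd ℂ) z * z = ((‖z‖ : ℂ)) * (‖z‖ : ℂ) := by
    rw [← Complex.normSq_eq_conj_mul_self]
    rw [← Complex.ofReal_mul]
    congr 1
    rw [← Complex.sq_norm]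
    ring
  have hcc : star c * c = 1 := by
    calc star c * c
        = ((starRingEnd ℂ) z * z) / ((‖z‖ : ℂ) * (‖z‖ : ℂ)) := by
          rw [hc, Complex.star_def, map_div₀, map_neg, Complex.conj_ofReal]
          ring
    _ = 1 := by
          rw [hnormsq]
          exact div_self (mul_ne_zero habs0 habs0)
  have hcz : star c * z = -(‖z‖ : ℂ) := by
    calc star c * z = -(((starRingEnd ℂ) z * z) / (‖z‖ : ℂ)) := by
          rw [hc, Complex.star_def, map_div₀, map_neg, Complex.conj_ofReal]
          ring
    _ = -(‖z‖ : ℂ) := by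
          rw [hnormsq]
          field_simp
  have hqp : T q p = (starRingEnd ℂ) z := by
    have hh := hT.1
    unfold Matrix.IsHermitian at hh
    have e4 : Tᴴ q p = T q p := by rw [hh]
    rw [← e4, Matrix.conjTranspose_apply]
    rfl
  have hzc : T q p * c = -(‖z‖ : ℂ) := by
    calc T q p * c = -((starRingEnd ℂ) z * z) / (‖z‖ : ℂ) := by
          rw [hqp, hc]
          ring
    _ = -(‖z‖ : ℂ) := by
          rw [hnormsq]
          field_simp
  have hval : star c * (T p p * c + T p q) + (T q p * c + T q q)
      = T p p + T q q - 2 * (‖z‖ : ℂ) := by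
    have : T p q = z := rfl
    rw [this]
    linear_combination (T p p) * hcc + hcz + hzc
  rw [hval, Complex.le_def] at h0
  simp only [Complex.zero_re, Complex.sub_re, Complex.add_re, Complex.mul_re,
    Complex.ofReal_re, Complex.ofReal_im, Complex.re_ofNat, Complex.im_ofNat] at h0
  have h1 := h0.1
  nlinarith [h1]

lemma mval_bound {n : Type} [Fintype n] [DecidableEq n] (P : POVM n) (X : Matrix n n ℂ) :
    mval P X ≤ (Fintype.card n)^2 * ∑ p, ∑ q, ‖X p q‖ := by
  set S := ∑ p : n, ∑ q : n, ‖X p q‖ with hS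
  have hS0 : 0 ≤ S := by positivity
  have hXS : ∀ p q : n, ‖X p q‖ ≤ S := by
    intro p q
    calc ‖X p q‖ ≤ ∑ q' : n, ‖X p q'‖ :=
          Finset.single_le_sum (f := fun q' => ‖X p q'‖)
            (fun q' _ => by positivity) (Finset.mem_univ q)
    _ ≤ S := Finset.single_le_sum (f := fun p' => ∑ q' : n, ‖X p' q'‖)
          (fun p' _ => by positivity) (Finset.mem_univ p)
  have hdiag : ∀ p : n, ∑ i, (P.T i p p).re = 1 := by
    intro p
    have e : (∑ i, P.T i) p p = (1 : Matrix n n ℂ) p p := by rw [P.sum_eq]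
    rw [Matrix.one_apply_eq, Matrix.sum_apply] at e
    have : (∑ i, P.T i p p).re = (1:ℂ).re := by rw [e]
    simpa [Complex.re_sum] using this
  have hterm : ∀ i, ‖(P.T i * X).trace‖ ≤ S * ∑ p, ∑ q, ‖P.T i p q‖ := by
    intro i
    calc ‖(P.T i * X).trace‖
        = ‖∑ p, ∑ q, P.T i p q * X q p‖ := by
          simp [Matrix.trace, Matrix.diag_apply, Matrix.mul_apply]
    _ ≤ ∑ p, ‖∑ q, P.T i p q * X q p‖ := norm_sum_le _ _
    _ ≤ ∑ p, ∑ q, ‖P.T i p q * X q p‖ :=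
          Finset.sum_le_sum fun p _ => norm_sum_le _ _
    _ ≤ ∑ p, ∑ q, ‖P.T i p q‖ * S := by
          refine Finset.sum_le_sum fun p _ => Finset.sum_le_sum fun q _ => ?_
          rw [norm_mul]
          exact mul_le_mul_of_nonneg_left (hXS q p) (by positivity)
    _ = S * ∑ p, ∑ q, ‖P.T i p q‖ := by
          rw [Finset.mul_sum]
          refine Finset.sum_congr rfl fun p _ => ?_
          rw [Finset.mul_sum]
          refine Finset.sum_congr rfl fun q _ => ?_
          ring
  calc mval P X ≤ ∑ i, S * ∑ p, ∑ q, ‖P.T i p q‖ :=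
        Finset.sum_le_sum fun i _ => hterm i
  _ = S * ∑ p, ∑ q, ∑ i, ‖P.T i p q‖ := by
        rw [← Finset.mul_sum]
        congr 1
        rw [Finset.sum_comm]
        refine Finset.sum_congr rfl fun p _ => ?_
        rw [Finset.sum_comm]
  _ ≤ S * ∑ p : n, ∑ q : n, (1 + 1) / 2 := by
        refine mul_le_mul_of_nonneg_left ?_ hS0
        refine Finset.sum_le_sum fun p _ => Finset.sum_le_sum fun q _ => ?_
        calc (∑ i, ‖P.T i p q‖)
            ≤ ∑ i, ((P.T i p p).re + (P.T i q q).re) / 2 :=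
              Finset.sum_le_sum fun i _ => psd_abs_entry (P.pos i) p q
        _ = ((∑ i, (P.T i p p).re) + (∑ i, (P.T i q q).re)) / 2 := by
              rw [← Finset.sum_add_distrib, ← Finset.sum_div]
        _ = (1 + 1) / 2 := by rw [hdiag p, hdiag q]
  _ ≤ (Fintype.card n)^2 * S := by
        simp only [Finset.sum_const, Finset.card_univ, nsmul_eq_mul]
        norm_num
        nlinarith [hS0]
  _ = (Fintype.card n)^2 * ∑ p, ∑ q, ‖X p q‖ := by rw [hS]

def trivPOVM (n : Type) [Fintype n] [DecidableEq n] : POVM n where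
  k := 1
  T := fun _ => 1
  pos := fun _ => Matrix.PosSemidef.one
  sum_eq := by simp

section Small3
variable {γ δ : Type} [Fintype γ] [DecidableEq γ] [Fintype δ] [DecidableEq δ]

lemma one_eq_prodOp : (1 : Matrix (γ × δ) (γ × δ) ℂ) = prodOp 1 1 := by
  ext p q
  by_cases h1 : p.1 = q.1 <;> by_cases h2 : p.2 = q.2 <;>
    simp [prodOp, Matrix.one_apply, Prod.ext_iff, h1, h2]

lemma one_mem_sepCone [Nonempty γ] [Nonempty δ] :
    (1 : Matrix (γ × δ) (γ × δ) ℂ) ∈ SepCone γ δ := by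
  rw [one_eq_prodOp]
  exact psd_prodOp_mem_sepCone Matrix.PosSemidef.one Matrix.PosSemidef.one

lemma ptranspose_one : ptranspose (1 : Matrix (γ × δ) (γ × δ) ℂ) = 1 := by
  ext p q
  by_cases h1 : p.1 = q.1 <;> by_cases h2 : p.2 = q.2 <;>
    simp [ptranspose, Matrix.one_apply, Prod.ext_iff, h1, h2, eq_comm]

end Small3

lemma attack_sep [Nonempty α] [Nonempty β] (P : POVM ((Fin 2 × α) × (Fin 2 × β)))
    (hP : ∀ i, P.T i ∈ SepCone (Fin 2 × α) (Fin 2 × β)) :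
    ∀ i, (attack P).T i ∈ SepCone α β := by
  intro i
  simp only [attack]
  induction i using Fin.addCases with
  | left i =>
    simp only [Fin.addCases_left]
    exact smul_mem_sepCone (by norm_num) (Wp_mem_sepCone (hP i))
  | right i =>
    simp only [Fin.addCases_right]
    exact smul_mem_sepCone (by norm_num) (Wm_mem_sepCone (hP i))

lemma attack_ppt (P : POVM ((Fin 2 × α) × (Fin 2 × β)))
    (hP : ∀ i, (ptranspose (P.T i)).PosSemidef) :
    ∀ i, (ptranspose ((attack P).T i)).PosSemidef := by
  intro i
  simp only [attack]
  induction i using Fin.addCases with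
  | left i =>
    simp only [Fin.addCases_left]
    have e : ptranspose (((8:ℝ)⁻¹ : ℝ) • Wp (P.T i))
        = ((8:ℝ)⁻¹ : ℝ) • Vp (ptranspose (P.T i)) := by
      rw [← pt_Wp]
      rfl
    rw [e, ← cSmul_eq_rSmul]
    exact psd_real_smul (Vp_psd (hP i)) (by norm_num)
  | right i =>
    simp only [Fin.addCases_right]
    have e : ptranspose (((8:ℝ)⁻¹ : ℝ) • Wm (P.T i))
        = ((8:ℝ)⁻¹ : ℝ) • Vm (ptranspose (P.T i)) := by
      rw [← pt_Wm]
      rfl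
    rw [e, ← cSmul_eq_rSmul]
    exact psd_real_smul (Vm_psd (hP i)) (by norm_num)

lemma mval_nonneg {n : Type} [Fintype n] [DecidableEq n] (P : POVM n) (X : Matrix n n ℂ) :
    0 ≤ mval P X :=
  Finset.sum_nonneg fun i _ => norm_nonneg _

end PrivAux


/-- For a private state `γ` built from orthogonal shield states `σ^±` and its
key-attacked version `γ̂`, `‖γ − γ̂‖_SEP ≤ (3/2) ‖σ⁺ − σ⁻‖_{SEP(A':B')}` and
`‖γ − γ̂‖_PPT ≤ ‖σ⁺ − σ⁻‖_{PPT(A':B')}`. -/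
theorem privateState_keyAttacked_norm_bounds {α β : Type}
    [Fintype α] [DecidableEq α] [Fintype β] [DecidableEq β]
    (σp σm : Matrix (α × β) (α × β) ℂ)
    (hp : σp.PosSemidef) (hptr : σp.trace = 1)
    (hm : σm.PosSemidef) (hmtr : σm.trace = 1)
    (horth : (σp * σm).trace = 0) :
    sepNorm (privateState σp σm - keyAttacked σp σm) ≤ (3/2) * sepNorm (σp - σm) ∧
    pptNorm (privateState σp σm - keyAttacked σp σm) ≤ pptNorm (σp - σm) := by
  classical
  have hne : Nonempty (α × β) := by
    by_contra h
    rw [not_nonempty_iff] at h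
    have h0 : σp.trace = 0 := by simp [Matrix.trace]
    exact one_ne_zero (hptr.symm.trans h0)
  have hα : Nonempty α := ⟨hne.some.1⟩
  have hβ : Nonempty β := ⟨hne.some.2⟩
  set SS : Set ℝ := {r : ℝ | ∃ P : POVM (α × β), (∀ i, P.T i ∈ SepCone α β)
    ∧ r = mval P (σp - σm)} with hSS
  set SP : Set ℝ := {r : ℝ | ∃ P : POVM (α × β), (∀ i, (ptranspose (P.T i)).PosSemidef)
    ∧ r = mval P (σp - σm)} with hSP
  have hbddS : BddAbove SS := by
    refine ⟨(Fintype.card (α × β))^2 * ∑ p, ∑ q, ‖(σp - σm) p q‖, ?_⟩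
    rintro r ⟨P, -, rfl⟩
    exact PrivAux.mval_bound P _
  have hbddP : BddAbove SP := by
    refine ⟨(Fintype.card (α × β))^2 * ∑ p, ∑ q, ‖(σp - σm) p q‖, ?_⟩
    rintro r ⟨P, -, rfl⟩
    exact PrivAux.mval_bound P _
  have hmemS : mval (PrivAux.trivPOVM (α × β)) (σp - σm) ∈ SS :=
    ⟨PrivAux.trivPOVM (α × β), fun _ => PrivAux.one_mem_sepCone, rfl⟩
  have hmemP : mval (PrivAux.trivPOVM (α × β)) (σp - σm) ∈ SP := by
    refine ⟨PrivAux.trivPOVM (α × β), fun i => ?_, rfl⟩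
    rw [show (PrivAux.trivPOVM (α × β)).T i = 1 from rfl, PrivAux.ptranspose_one]
    exact Matrix.PosSemidef.one
  have hS0 : 0 ≤ sSup SS := le_trans (PrivAux.mval_nonneg _ _) (le_csSup hbddS hmemS)
  have hP0 : 0 ≤ sSup SP := le_trans (PrivAux.mval_nonneg _ _) (le_csSup hbddP hmemP)
  constructor
  · have h1 : sepNorm (privateState σp σm - keyAttacked σp σm) ≤ sSup SS := by
      apply Real.sSup_le
      · rintro r ⟨P, hPs, rfl⟩
        exact le_trans (PrivAux.mval_le_attack P σp σm)
          (le_csSup hbddS ⟨PrivAux.attack P, PrivAux.attack_sep P hPs, rfl⟩)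
      · exact hS0
    have h2 : sepNorm (σp - σm) = sSup SS := rfl
    rw [h2]
    linarith
  · have h1 : pptNorm (privateState σp σm - keyAttacked σp σm) ≤ sSup SP := by
      apply Real.sSup_le
      · rintro r ⟨P, hPp, rfl⟩
        exact le_trans (PrivAux.mval_le_attack P σp σm)
          (le_csSup hbddP ⟨PrivAux.attack P, PrivAux.attack_ppt P hPp, rfl⟩)
      · exact hP0
    exact h1

end
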